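/- If A is a centrally essential ring such that A/J(A) is not commutative, then the polynomial ring A[x] is a centrally essential ring which is not right quasi-invariant (i.e., it has a maximal right ideal that is not a two-sided ideal). -/
import Mathlib


/-- A ring is *centrally essential* if its center is an essential submodule over the
center, i.e. every nonzero element has a nonzero central multiple by a central element. -/
def IsCentrallyEssential (A : Type*) [Ring A] : Prop :=
  ∀ a : A, a ≠ 0 → ∃ z ∈ Set.center A, a * z ≠ 0 ∧ a * z ∈ Set.center A

/-- A right ideal (submodule of `A` as a right module over itself) is a two-sided ideal
if it is closed under left multiplication. -/
def IsTwoSidedRightIdeal {A : Type*} [Ring A] (I : Submodule Aᵐᵒᵖ A) : Prop :=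
  ∀ a x : A, x ∈ I → a * x ∈ I

/-- A ring is right quasi-invariant if every maximal right ideal is two-sided. -/
def IsRightQuasiInvariant (A : Type*) [Ring A] : Prop :=
  ∀ M : Submodule Aᵐᵒᵖ A, IsCoatom M → IsTwoSidedRightIdeal M


open Polynomial MulOpposite

section Aux

variable {A : Type*} [Ring A]


lemma centerC {c : A} (hc : c ∈ Set.center A) : (C c : A[X]) ∈ Set.center A[X] := by
  rw [Semigroup.mem_center_iff]
  intro q
  ext n
  rw [coeff_mul_C, coeff_C_mul, (Semigroup.mem_center_iff.mp hc _)]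

lemma center_of_coeffs {p : A[X]} (hp : ∀ n, p.coeff n ∈ Set.center A) :
    p ∈ Set.center A[X] := by
  rw [Semigroup.mem_center_iff]
  intro q
  induction q using Polynomial.induction_on' with
  | add f g hf hg => rw [add_mul, mul_add, hf, hg]
  | monomial n s =>
      have hCs : C s * p = p * C s := by
        ext k
        rw [coeff_C_mul, coeff_mul_C, (Semigroup.mem_center_iff.mp (hp k) s)]
      rw [← C_mul_X_pow_eq_monomial]
      rw [mul_assoc, X_pow_mul, ← mul_assoc, hCs, mul_assoc]

open Classical in
lemma poly_ce_aux (h : IsCentrallyEssential A) (n : ℕ) :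
    ∀ p : A[X], (p.support.filter fun i => p.coeff i ∉ Set.center A).card = n → p ≠ 0 →
      ∃ z ∈ Set.center A[X], p * z ≠ 0 ∧ p * z ∈ Set.center A[X] := by
  induction n using Nat.strong_induction_on with
  | _ n ih =>
    intro p hcard hp
    rcases Nat.eq_zero_or_pos n with hn | hn
    · -- all coefficients central
      refine ⟨1, Set.one_mem_center, by simpa using hp, ?_⟩
      rw [mul_one]
      apply center_of_coeffs
      intro k
      by_contra hk
      have hk0 : p.coeff k ≠ 0 := fun h0 => hk (h0 ▸ Set.zero_mem_center)
      have : k ∈ p.support.filter fun i => p.coeff i ∉ Set.center A := by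
        simp [Polynomial.mem_support_iff, hk0, hk]
      have h0 : (p.support.filter fun i => p.coeff i ∉ Set.center A).card = 0 := by
        rw [hcard, hn]
      rw [Finset.card_eq_zero] at h0
      rw [h0] at this
      simp at this
    · -- pick a bad coefficient
      have hne : (p.support.filter fun i => p.coeff i ∉ Set.center A).Nonempty := by
        rw [← Finset.card_pos, hcard]; exact hn
      obtain ⟨i, hi⟩ := hne
      simp only [Finset.mem_filter, Polynomial.mem_support_iff] at hi
      obtain ⟨c, hc, hne0, hcen⟩ := h (p.coeff i) hi.1
      set p' := p * C c with hp'
      have hcoeff : ∀ k, p'.coeff k = p.coeff k * c := fun k => coeff_mul_C _ _ _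
      have hp'0 : p' ≠ 0 := fun h0 => hne0 (by rw [← hcoeff i, h0, Polynomial.coeff_zero])
      have hsub : (p'.support.filter fun k => p'.coeff k ∉ Set.center A) ⊂
          (p.support.filter fun k => p.coeff k ∉ Set.center A) := by
        constructor
        · intro k hk
          simp only [Finset.mem_filter, Polynomial.mem_support_iff, hcoeff] at hk ⊢
          refine ⟨fun h0 => hk.1 (by rw [h0, zero_mul]), fun hcen' => hk.2 ?_⟩
          exact Set.mul_mem_center hcen' hc
        · intro hsup
          have : i ∈ p'.support.filter fun k => p'.coeff k ∉ Set.center A :=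
            hsup (by simp [Polynomial.mem_support_iff, hi.1, hi.2])
          simp only [Finset.mem_filter, hcoeff] at this
          exact this.2 hcen
      have hlt : (p'.support.filter fun k => p'.coeff k ∉ Set.center A).card < n :=
        hcard ▸ Finset.card_lt_card hsub
      obtain ⟨z, hz, hz0, hzc⟩ := ih _ hlt p' rfl hp'0
      refine ⟨C c * z, Set.mul_mem_center (centerC hc) hz, ?_, ?_⟩
      · rwa [← mul_assoc]
      · rwa [← mul_assoc]

lemma poly_ce (h : IsCentrallyEssential A) : IsCentrallyEssential A[X] :=
  fun p hp => poly_ce_aux h _ p rfl hp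


/-- Left evaluation at `b`: `∑ aᵢ xⁱ ↦ ∑ bⁱ aᵢ`. -/
noncomputable def lev (b : A) (f : A[X]) : A := f.sum fun i a => b ^ i * a

lemma lev_add (b : A) (f g : A[X]) : lev b (f + g) = lev b f + lev b g :=
  Polynomial.sum_add_index f g _ (fun i => mul_zero _) (fun i x y => mul_add _ x y)

lemma lev_zero (b : A) : lev b 0 = 0 := Polynomial.sum_zero_index _

lemma lev_monomial (b : A) (n : ℕ) (a : A) : lev b (monomial n a) = b ^ n * a :=
  Polynomial.sum_monomial_index a _ (mul_zero _)

lemma lev_C (b : A) (a : A) : lev b (C a) = a := by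
  rw [← monomial_zero_left, lev_monomial, pow_zero, one_mul]

lemma lev_one (b : A) : lev b 1 = 1 := by
  simpa using lev_C b 1

lemma lev_X (b : A) : lev b X = b := by
  rw [X, lev_monomial, pow_one, mul_one]

lemma lev_sub (b : A) (f g : A[X]) : lev b (f - g) = lev b f - lev b g := by
  have h := lev_add b (f - g) g
  rw [sub_add_cancel] at h
  rw [h, add_sub_cancel_right]

lemma lev_mul_monomial (b : A) (f : A[X]) (n : ℕ) (s : A) :
    lev b (f * monomial n s) = b ^ n * lev b f * s := by
  induction f using Polynomial.induction_on' with
  | add p q hp hq => rw [add_mul, lev_add, lev_add, hp, hq]; noncomm_ring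
  | monomial m a =>
      rw [monomial_mul_monomial, lev_monomial, lev_monomial, pow_add]
      rw [pow_mul_comm b m n]
      noncomm_ring

variable (b : A) (M₀ : Ideal Aᵐᵒᵖ)

/-- The right ideal `{f : A[X] | lev b f ∈ M₀}`. -/
noncomputable def levIdeal (hstab : ∀ (n : ℕ) (s m : A), op m ∈ M₀ → op (b ^ n * m * s) ∈ M₀) :
    Submodule (A[X])ᵐᵒᵖ A[X] where
  carrier := {f | op (lev b f) ∈ M₀}
  add_mem' := by
    intro f g hf hg
    simp only [Set.mem_setOf_eq, lev_add, op_add] at *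
    exact M₀.add_mem hf hg
  zero_mem' := by simp [lev_zero]
  smul_mem' := by
    intro c f hf
    rw [MulOpposite.smul_eq_mul_unop]
    induction c.unop using Polynomial.induction_on' with
    | add p q hp hq =>
        simp only [Set.mem_setOf_eq, mul_add, lev_add, op_add] at *
        exact M₀.add_mem hp hq
    | monomial n s =>
        simp only [Set.mem_setOf_eq] at *
        rw [lev_mul_monomial]
        exact hstab n s _ hf

lemma levIdeal_mem (hstab) (f : A[X]) : f ∈ levIdeal b M₀ hstab ↔ op (lev b f) ∈ M₀ :=
  Iff.rfl

lemma levIdeal_coatom (hM : M₀.IsMaximal) (hstab) : IsCoatom (levIdeal b M₀ hstab) := by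
  constructor
  · intro htop
    have h1 : (1 : A[X]) ∈ levIdeal b M₀ hstab := htop ▸ Submodule.mem_top
    rw [levIdeal_mem, lev_one] at h1
    exact hM.ne_top (Ideal.eq_top_iff_one M₀ |>.mpr h1)
  · intro N hN
    obtain ⟨f, hfN, hfM⟩ := SetLike.exists_of_lt hN
    rw [levIdeal_mem] at hfM
    set r := lev b f with hr
    have hsup : M₀ ⊔ Ideal.span {op r} = ⊤ := by
      refine hM.1.2 _ (lt_of_le_of_ne le_sup_left fun he => hfM ?_)
      exact he ▸ Submodule.mem_sup_right (Ideal.subset_span rfl)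
    have h1 : (1 : Aᵐᵒᵖ) ∈ M₀ ⊔ Ideal.span {op r} := hsup ▸ Submodule.mem_top
    obtain ⟨u, hu, t, ht, hut⟩ := Submodule.mem_sup.mp h1
    obtain ⟨w, hw⟩ := Submodule.mem_span_singleton.mp ht
    have hg : f * C (unop w) ∈ N := by
      have := N.smul_mem (op (C (unop w))) hfN
      rwa [op_smul_eq_mul] at this
    have hlev : lev b (f * C (unop w)) = r * unop w := by
      rw [← monomial_zero_left, lev_mul_monomial, pow_zero, one_mul]
    have h1g : (1 : A[X]) - f * C (unop w) ∈ levIdeal b M₀ hstab := by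
      rw [levIdeal_mem, lev_sub, lev_one, hlev]
      have : op ((1 : A) - r * unop w) = u := by
        rw [op_sub, op_mul, op_unop, op_one]
        have : w * op r = t := by rw [← hw]; rfl
        rw [this, ← hut, add_sub_cancel_right]
      rw [this]; exact hu
    have hone : (1 : A[X]) ∈ N := by
      have := N.add_mem (le_of_lt hN h1g) hg
      rwa [sub_add_cancel] at this
    rw [Submodule.eq_top_iff']
    intro p
    have := N.smul_mem (op p) hone
    rwa [op_smul_eq_mul, one_mul] at this

section JacobsonUnits
variable {R : Type*} [Ring R]

lemma exists_left_inv {x : R} (hx : ∀ L : Ideal R, L.IsMaximal → x ∈ L) (y : R) :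
    ∃ u : R, u * (1 - y * x) = 1 := by
  by_contra hno
  push_neg at hno
  have hspan : Ideal.span {1 - y * x} ≠ ⊤ := by
    intro he
    have h1 : (1 : R) ∈ Ideal.span {1 - y * x} := he ▸ Submodule.mem_top
    obtain ⟨u, hu⟩ := Submodule.mem_span_singleton.mp h1
    exact hno u hu
  obtain ⟨L, hL, hle⟩ := Ideal.exists_le_maximal _ hspan
  have h1 : 1 - y * x ∈ L := hle (Ideal.subset_span rfl)
  have h2 : y * x ∈ L := L.mul_mem_left y (hx L hL)
  have : (1 : R) ∈ L := by
    have := L.add_mem h1 h2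
    rwa [sub_add_cancel] at this
  exact hL.ne_top (Ideal.eq_top_iff_one L |>.mpr this)

lemma isUnit_of_jacobson {x : R} (hx : x ∈ (⊥ : Ideal R).jacobson) (y : R) :
    IsUnit (1 - y * x) := by
  have hx' : ∀ L : Ideal R, L.IsMaximal → x ∈ L := fun L hL =>
    Submodule.mem_sInf.mp hx L ⟨bot_le, hL⟩
  obtain ⟨u, hu⟩ := exists_left_inv hx' y
  have hu' : u = 1 - -(u * y) * x := by
    have : u - u * (y * x) = 1 := by rw [← mul_one_sub, hu]
    have h2 : u = 1 + u * (y * x) := by rw [← this]; noncomm_ring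
    calc u = 1 + u * (y * x) := h2
    _ = 1 - -(u * y) * x := by noncomm_ring
  obtain ⟨v, hv⟩ := exists_left_inv hx' (-(u * y))
  rw [← hu'] at hv
  have hveq : v = 1 - y * x := by
    calc v = v * (u * (1 - y * x)) := by rw [hu, mul_one]
    _ = v * u * (1 - y * x) := by rw [mul_assoc]
    _ = 1 - y * x := by rw [hv, one_mul]
  exact ⟨⟨1 - y * x, u, hveq ▸ hv, hu⟩, rfl⟩

lemma jacobson_of_isUnit {x : R} (h : ∀ y : R, IsUnit (1 - y * x)) :
    x ∈ (⊥ : Ideal R).jacobson := by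
  rw [Ideal.jacobson]
  rw [Submodule.mem_sInf]
  rintro L ⟨-, hL⟩
  by_contra hx
  have hsup : L ⊔ Ideal.span {x} = ⊤ := by
    refine hL.1.2 _ (lt_of_le_of_ne le_sup_left fun he => hx ?_)
    exact he ▸ Submodule.mem_sup_right (Ideal.subset_span rfl)
  have h1 : (1 : R) ∈ L ⊔ Ideal.span {x} := hsup ▸ Submodule.mem_top
  obtain ⟨u, hu, t, ht, hut⟩ := Submodule.mem_sup.mp h1
  obtain ⟨w, hw⟩ := Submodule.mem_span_singleton.mp ht
  have : u = 1 - w * x := by rw [smul_eq_mul] at hw; rw [← hut, hw, add_sub_cancel_right]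
  have : IsUnit u := this ▸ h w
  obtain ⟨v, hv⟩ := this
  have : (1 : R) ∈ L := by
    have := Ideal.mul_mem_left L (↑v⁻¹) hu
    rwa [← hv, Units.inv_mul] at this
  exact hL.ne_top (Ideal.eq_top_iff_one L |>.mpr this)

lemma isUnit_one_sub_swap {p q : R} (h : IsUnit (1 - p * q)) : IsUnit (1 - q * p) := by
  obtain ⟨u, hu⟩ := h
  set v : R := ↑u⁻¹ with hv
  have hv1 : (1 - p * q) * v = 1 := by rw [← hu]; exact u.mul_inv
  have hv2 : v * (1 - p * q) = 1 := by rw [← hu]; exact u.inv_mul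
  have h1 : p * q * v = v - 1 := by
    have : v - p * q * v = 1 := by rw [← one_sub_mul, hv1]
    rw [← this]; noncomm_ring
  have h2 : v * (p * q) = v - 1 := by
    have : v - v * (p * q) = 1 := by rw [← mul_one_sub, hv2]
    rw [← this]; noncomm_ring
  refine ⟨⟨1 - q * p, 1 + q * v * p, ?_, ?_⟩, rfl⟩
  · calc (1 - q * p) * (1 + q * v * p)
        = 1 + q * v * p - q * p - q * (p * q * v) * p := by noncomm_ring
    _ = 1 := by rw [h1]; noncomm_ring
  · calc (1 + q * v * p) * (1 - q * p)
        = 1 - q * p + q * v * p - q * (v * (p * q)) * p := by noncomm_ring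
    _ = 1 := by rw [h2]; noncomm_ring

end JacobsonUnits

lemma not_rqi (hnc : ¬ ∀ a b : A, a * b - b * a ∈ (⊥ : Ideal A).jacobson) :
    ¬ IsRightQuasiInvariant A[X] := by
  intro hq
  apply hnc
  intro a b
  have key : ∀ M₀ : Ideal Aᵐᵒᵖ, M₀.IsMaximal → op (b * a - a * b) ∈ M₀ := by
    intro M₀ hM
    have hstab0 : ∀ (n : ℕ) (s m : A), op m ∈ M₀ → op ((0 : A) ^ n * m * s) ∈ M₀ := by
      intro n s m hm
      cases n with
      | zero =>
          rw [pow_zero, one_mul, op_mul]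
          exact Ideal.mul_mem_left _ _ hm
      | succ k =>
          rw [zero_pow (Nat.succ_ne_zero k), zero_mul, zero_mul]
          simpa using M₀.zero_mem
    have hts0 := hq _ (levIdeal_coatom 0 M₀ hM hstab0)
    have habs : ∀ u ∈ M₀, ∀ v : Aᵐᵒᵖ, u * v ∈ M₀ := by
      intro u hu v
      have hf : (C (unop u) : A[X]) ∈ levIdeal 0 M₀ hstab0 := by
        rw [levIdeal_mem, lev_C]; simpa using hu
      have h2 := hts0 (C (unop v)) _ hf
      rw [← C_mul, levIdeal_mem, lev_C, op_mul, op_unop, op_unop] at h2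
      exact h2
    have hstab : ∀ (n : ℕ) (s m : A), op m ∈ M₀ → op (b ^ n * m * s) ∈ M₀ := by
      intro n s m hm
      have h1 : op m * op (b ^ n) ∈ M₀ := habs _ hm _
      have heq : op (b ^ n * m * s) = op s * (op m * op (b ^ n)) := by
        rw [op_mul, op_mul]
      rw [heq]
      exact Ideal.mul_mem_left _ _ h1
    have htsb := hq _ (levIdeal_coatom b M₀ hM hstab)
    have hXb : (X - C b : A[X]) ∈ levIdeal b M₀ hstab := by
      rw [levIdeal_mem, lev_sub, lev_X, lev_C, sub_self]
      simpa using M₀.zero_mem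
    have h3 := htsb (C a) _ hXb
    rw [levIdeal_mem] at h3
    have heq : lev b (C a * (X - C b)) = b * a - a * b := by
      rw [mul_sub, ← C_mul, C_mul_X_eq_monomial, lev_sub, lev_monomial, lev_C, pow_one]
    rwa [heq] at h3
  have hj : op (b * a - a * b) ∈ (⊥ : Ideal Aᵐᵒᵖ).jacobson := by
    rw [Ideal.jacobson, Submodule.mem_sInf]
    rintro L ⟨-, hL⟩
    exact key L hL
  have hu1 : ∀ z : A, IsUnit ((1 : A) - (b * a - a * b) * z) := by
    intro z
    have h4 := isUnit_of_jacobson hj (op z)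
    have heq : (1 : Aᵐᵒᵖ) - op z * op (b * a - a * b) = op (1 - (b * a - a * b) * z) := by
      apply unop_injective
      simp [mul_sub, sub_mul]
    rw [heq] at h4
    exact isUnit_op.mp h4
  have hu2 : ∀ y : A, IsUnit ((1 : A) - y * (a * b - b * a)) := by
    intro y
    have h5 := hu1 (-y)
    have heq : (1 : A) - (b * a - a * b) * -y = 1 - (a * b - b * a) * y := by noncomm_ring
    rw [heq] at h5
    exact isUnit_one_sub_swap h5
  exact jacobson_of_isUnit hu2

end Aux

/-- If `A` is centrally essential and `A/J(A)` is not commutative, then `A[x]` is a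
centrally essential ring which is not right quasi-invariant. -/
theorem stmt_11 (A : Type*) [Ring A] (h : IsCentrallyEssential A)
    (hnc : ¬ ∀ a b : A, a * b - b * a ∈ (⊥ : Ideal A).jacobson) :
    IsCentrallyEssential (Polynomial A) ∧ ¬ IsRightQuasiInvariant (Polynomial A) := by
  exact ⟨poly_ce h, not_rqi hnc⟩
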